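/- Let 0 < q < p ≤ 1 and let n ≥ 2 be a natural number. Then for every x ∈ [0,1], B_{n,p,q}(t³;x) = (p^{2n-2}/[n]²_{p,q}) x + (p^{n-2}(2p+q) q [n-1]_{p,q}/[n]²_{p,q}) x² + (q³ [n-1]_{p,q} [n-2]_{p,q}/[n]²_{p,q}) x³. -/

import Mathlib

open Finset Set Filter Topology

/-- The (p,q)-integer `[n]_{p,q} = ∑_{i=0}^{n-1} p^(n-1-i) q^i`. -/
noncomputable def pqInt (p q : ℝ) (n : ℕ) : ℝ :=
  ∑ i ∈ Finset.range n, p ^ (n - 1 - i) * q ^ i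

/-- The (p,q)-factorial `[n]_{p,q}! = ∏_{j=1}^n [j]_{p,q}`. -/
noncomputable def pqFactorial (p q : ℝ) (n : ℕ) : ℝ :=
  ∏ j ∈ Finset.range n, pqInt p q (j + 1)

/-- The (p,q)-binomial coefficient. -/
noncomputable def pqChoose (p q : ℝ) (n k : ℕ) : ℝ :=
  pqFactorial p q n / (pqFactorial p q k * pqFactorial p q (n - k))

/-- The node `p^(n-k) [k]_{p,q} / [n]_{p,q}` of the (p,q)-Bernstein operator. -/
noncomputable def pqNode (p q : ℝ) (n k : ℕ) : ℝ :=
  p ^ (n - k) * pqInt p q k / pqInt p q n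

/-- The basis function
`p^((k(k-1)-n(n-1))/2) C(n,k)_{p,q} x^k ∏_{s=0}^{n-k-1} (p^s - q^s x)`,
where `p^((k(k-1)-n(n-1))/2)` is written as `p^(k(k-1)/2) / p^(n(n-1)/2)`. -/
noncomputable def pqBasis (p q : ℝ) (n k : ℕ) (x : ℝ) : ℝ :=
  (p ^ (k.choose 2) / p ^ (n.choose 2)) * pqChoose p q n k * x ^ k *
    ∏ s ∈ Finset.range (n - k), (p ^ s - q ^ s * x)

/-- The (p,q)-Bernstein operator `B_{n,p,q}(f;x)`. -/
noncomputable def pqBernstein (p q : ℝ) (n : ℕ) (f : ℝ → ℝ) (x : ℝ) : ℝ :=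
  ∑ k ∈ Finset.range (n + 1), pqBasis p q n k x * f (pqNode p q n k)

/-- The bivariate (p,q)-Bernstein operator
`B_{n,m}^{(p₁,q₁),(p₂,q₂)}(f;x,y)`. -/
noncomputable def pqBernstein2 (p₁ q₁ p₂ q₂ : ℝ) (n m : ℕ)
    (f : ℝ → ℝ → ℝ) (x y : ℝ) : ℝ :=
  ∑ k ∈ Finset.range (n + 1), ∑ j ∈ Finset.range (m + 1),
    pqBasis p₁ q₁ n k x * pqBasis p₂ q₂ m j y *
      f (pqNode p₁ q₁ n k) (pqNode p₂ q₂ m j)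

lemma pqInt_zero (p q : ℝ) : pqInt p q 0 = 0 := by simp [pqInt]

lemma pqInt_succ (p q : ℝ) (n : ℕ) : pqInt p q (n + 1) = p ^ n + q * pqInt p q n := by
  unfold pqInt
  rw [Finset.sum_range_succ']
  simp only [Nat.add_sub_cancel, Nat.sub_zero, pow_zero, mul_one]
  rw [Finset.mul_sum, add_comm]
  congr 1
  refine Finset.sum_congr rfl fun i hi => ?_
  have : n - (i + 1) = n - 1 - i := by omega
  rw [this]
  ring

lemma pqInt_add (p q : ℝ) (a b : ℕ) :
    pqInt p q (a + b) = p ^ a * pqInt p q b + q ^ b * pqInt p q a := by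
  induction b with
  | zero => simp [pqInt_zero]
  | succ b ih =>
    have : a + (b + 1) = (a + b) + 1 := by omega
    rw [this, pqInt_succ, ih, pqInt_succ, pow_add, pow_succ]
    ring

lemma pqInt_pos {p q : ℝ} (hq : 0 < q) (hqp : q < p) {n : ℕ} (hn : 0 < n) :
    0 < pqInt p q n := by
  have hp : 0 < p := hq.trans hqp
  obtain ⟨m, rfl⟩ := Nat.exists_eq_succ_of_ne_zero hn.ne'
  induction m with
  | zero => simp [pqInt_succ, pqInt_zero]
  | succ m ih =>
    rw [pqInt_succ]
    have := ih (Nat.succ_pos m)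
    positivity

lemma pqInt_nonneg {p q : ℝ} (hq : 0 < q) (hqp : q < p) (n : ℕ) :
    0 ≤ pqInt p q n := by
  cases n with
  | zero => simp [pqInt_zero]
  | succ m => exact (pqInt_pos hq hqp (Nat.succ_pos m)).le

lemma pqFactorial_pos {p q : ℝ} (hq : 0 < q) (hqp : q < p) (n : ℕ) :
    0 < pqFactorial p q n := by
  unfold pqFactorial
  exact Finset.prod_pos fun j _ => pqInt_pos hq hqp (Nat.succ_pos j)

lemma pqFactorial_zero (p q : ℝ) : pqFactorial p q 0 = 1 := by simp [pqFactorial]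

lemma pqFactorial_succ (p q : ℝ) (n : ℕ) :
    pqFactorial p q (n + 1) = pqFactorial p q n * pqInt p q (n + 1) := by
  unfold pqFactorial; rw [Finset.prod_range_succ]

lemma pqChoose_zero {p q : ℝ} (hq : 0 < q) (hqp : q < p) (n : ℕ) :
    pqChoose p q n 0 = 1 := by
  unfold pqChoose
  rw [pqFactorial_zero]
  field_simp [(pqFactorial_pos hq hqp n).ne']
  simp

lemma pqChoose_self {p q : ℝ} (hq : 0 < q) (hqp : q < p) (n : ℕ) :
    pqChoose p q n n = 1 := by
  unfold pqChoose
  simp only [Nat.sub_self, pqFactorial_zero]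
  field_simp [(pqFactorial_pos hq hqp n).ne']

lemma pqChoose_absorb {p q : ℝ} (hq : 0 < q) (hqp : q < p) {n k : ℕ} (hk : k ≤ n) :
    pqChoose p q (n + 1) (k + 1) * pqInt p q (k + 1) =
      pqInt p q (n + 1) * pqChoose p q n k := by
  unfold pqChoose
  have h1 : n + 1 - (k + 1) = n - k := by omega
  rw [h1, pqFactorial_succ p q n, pqFactorial_succ p q k]
  have hFn := (pqFactorial_pos hq hqp n).ne'
  have hFk := (pqFactorial_pos hq hqp k).ne'
  have hFnk := (pqFactorial_pos hq hqp (n - k)).ne'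
  have hk1 := (pqInt_pos hq hqp (Nat.succ_pos k)).ne'
  field_simp

lemma pqChoose_pascal {p q : ℝ} (hq : 0 < q) (hqp : q < p) {n k : ℕ} (hk : k < n) :
    pqChoose p q (n + 1) (k + 1) =
      q ^ (k + 1) * pqChoose p q n (k + 1) + p ^ (n - k) * pqChoose p q n k := by
  unfold pqChoose
  have h1 : n + 1 - (k + 1) = n - k := by omega
  obtain ⟨j, hj⟩ : ∃ j, n - k = j + 1 := ⟨n - k - 1, by omega⟩
  have h2 : n - (k + 1) = j := by omega
  have hkey : pqInt p q (n + 1) =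
      p ^ (n - k) * pqInt p q (k + 1) + q ^ (k + 1) * pqInt p q (n - k) := by
    have : (n - k) + (k + 1) = n + 1 := by omega
    rw [← this, pqInt_add]
  rw [hj] at hkey
  rw [h1, h2, hj]
  rw [pqFactorial_succ p q n, pqFactorial_succ p q k, pqFactorial_succ p q j]
  have hFn := (pqFactorial_pos hq hqp n).ne'
  have hFk := (pqFactorial_pos hq hqp k).ne'
  have hFj := (pqFactorial_pos hq hqp j).ne'
  have hk1 := (pqInt_pos hq hqp (Nat.succ_pos k)).ne'
  have hj1 := (pqInt_pos hq hqp (Nat.succ_pos j)).ne'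
  field_simp
  linear_combination hkey

noncomputable def pqProd (p q x : ℝ) (m : ℕ) : ℝ := ∏ s ∈ Finset.range m, (p ^ s - q ^ s * x)

noncomputable def bb (p q : ℝ) (n k : ℕ) (x : ℝ) : ℝ :=
  p ^ (k.choose 2) * pqChoose p q n k * x ^ k * pqProd p q x (n - k)

lemma choose_two_succ (k : ℕ) : (k + 1).choose 2 = k.choose 2 + k := by
  rw [show (2:ℕ) = 1 + 1 from rfl, Nat.choose_succ_succ]
  simp [Nat.choose_one_right, Nat.add_comm]

lemma pqProd_succ' {p : ℝ} (hp : p ≠ 0) (q x : ℝ) (m : ℕ) :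
    pqProd p q x (m + 1) = (1 - x) * (p ^ m * pqProd p q (q * x / p) m) := by
  unfold pqProd
  rw [Finset.prod_range_succ']
  simp only [pow_zero, one_mul]
  rw [mul_comm]
  congr 1
  rw [show (p ^ m : ℝ) = ∏ _s ∈ Finset.range m, p from by simp, ← Finset.prod_mul_distrib]
  refine Finset.prod_congr rfl fun s _ => ?_
  field_simp
  ring

lemma bsum {p q : ℝ} (hq : 0 < q) (hqp : q < p) (n : ℕ) :
    ∀ x : ℝ, ∑ k ∈ Finset.range (n + 1), bb p q n k x = p ^ (n.choose 2) := by
  have hp : (0:ℝ) < p := hq.trans hqp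
  induction n with
  | zero =>
    intro x
    simp [bb, pqChoose_zero hq hqp, pqProd]
  | succ n ih =>
    intro x
    set y := q * x / p with hy
    set Bt : ℕ → ℝ := fun k =>
      p ^ (k.choose 2) * q ^ k * pqChoose p q n k * x ^ k * pqProd p q x (n + 1 - k) with hBt
    set At : ℕ → ℝ := fun k =>
      p ^ ((k+1).choose 2) * p ^ (n - k) * pqChoose p q n k * x ^ (k+1) * pqProd p q x (n - k) with hAt
    have hsplit : ∑ k ∈ Finset.range (n + 2), bb p q (n+1) k x =
        (∑ k ∈ Finset.range (n + 1), Bt k) + (∑ k ∈ Finset.range (n + 1), At k) := by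
      rw [Finset.sum_range_succ'] -- peel k = 0
      rw [Finset.sum_range_succ]  -- peel last of remaining (index n)
      rw [Finset.sum_range_succ' _ n] -- Bt sum : peel 0
      rw [Finset.sum_range_succ _ n]  -- At sum : peel n
      have h0 : bb p q (n+1) 0 x = Bt 0 := by
        simp [bb, hBt, pqChoose_zero hq hqp]
      have hlast : bb p q (n+1) (n+1) x = At n := by
        simp [bb, hAt, pqChoose_self hq hqp, pqProd]
      have hmid : ∀ k < n, bb p q (n+1) (k+1) x = Bt (k+1) + At k := by
        intro k hk
        have hsub : n + 1 - (k + 1) = n - k := by omega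
        have hsub2 : n + 1 - (k + 1) = n + 1 - (k+1) := rfl
        rw [bb, pqChoose_pascal hq hqp hk, hsub]
        simp only [hBt, hAt]
        have : n + 1 - (k + 1) = n - k := hsub
        rw [this]
        ring
      rw [h0, hlast]
      rw [Finset.sum_congr rfl (fun k hk => hmid k (Finset.mem_range.mp hk))]
      rw [Finset.sum_add_distrib]
      ring
    have hA : ∑ k ∈ Finset.range (n + 1), At k = p ^ (n.choose 2) * p ^ n * x := by
      have : ∀ k ∈ Finset.range (n+1), At k = p ^ n * x * bb p q n k x := by
        intro k hk
        have hk' : k ≤ n := Nat.lt_succ_iff.mp (Finset.mem_range.mp hk)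
        simp only [hAt, bb, choose_two_succ]
        rw [pow_add]
        have hpk : p ^ k * p ^ (n - k) = p ^ n := by rw [← pow_add]; congr 1; omega
        linear_combination (p ^ k.choose 2 * pqChoose p q n k * x ^ (k+1) * pqProd p q x (n-k)) * hpk
      rw [Finset.sum_congr rfl this, ← Finset.mul_sum, ih x]
      ring
    have hB : ∑ k ∈ Finset.range (n + 1), Bt k = p ^ (n.choose 2) * p ^ n * (1 - x) := by
      have : ∀ k ∈ Finset.range (n+1), Bt k = p ^ n * (1 - x) * bb p q n k y := by
        intro k hk
        have hk' : k ≤ n := Nat.lt_succ_iff.mp (Finset.mem_range.mp hk)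
        simp only [hBt, bb]
        rw [show n + 1 - k = (n - k) + 1 from by omega, pqProd_succ' hp.ne' q x (n - k), ← hy]
        have hyk : q ^ k * x ^ k = p ^ k * y ^ k := by
          rw [hy, div_pow, ← mul_pow]
          field_simp
        have hpk : p ^ (n - k) * p ^ k = p ^ n := by rw [← pow_add]; congr 1; omega
        linear_combination (p ^ k.choose 2 * pqChoose p q n k * (1-x) * pqProd p q y (n-k) * p ^ (n-k)) * hyk
          + (p ^ k.choose 2 * pqChoose p q n k * (1-x) * pqProd p q y (n-k) * y ^ k) * hpk
      rw [Finset.sum_congr rfl this, ← Finset.mul_sum, ih y]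
      ring
    rw [hsplit, hA, hB, choose_two_succ, pow_add]
    ring

lemma bb_absorb {p q : ℝ} (hq : 0 < q) (hqp : q < p) {n k : ℕ} (hk : k ≤ n) (x : ℝ) :
    bb p q (n + 1) (k + 1) x * pqInt p q (k + 1) =
      pqInt p q (n + 1) * (x * (p ^ k * bb p q n k x)) := by
  unfold bb
  rw [show n + 1 - (k + 1) = n - k from by omega, choose_two_succ, pow_add]
  have h := pqChoose_absorb hq hqp hk (p := p) (q := q)
  linear_combination (p ^ k.choose 2 * p ^ k * x ^ (k + 1) * pqProd p q x (n - k)) * h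

lemma reduce {p q : ℝ} (hq : 0 < q) (hqp : q < p) (n : ℕ) (x : ℝ) (c : ℕ → ℝ) :
    ∑ k ∈ Finset.range (n + 2), bb p q (n + 1) k x * pqInt p q k * c k =
      pqInt p q (n + 1) * x * ∑ k ∈ Finset.range (n + 1), p ^ k * bb p q n k x * c (k + 1) := by
  rw [Finset.sum_range_succ']
  rw [pqInt_zero, mul_zero, zero_mul, add_zero]
  rw [Finset.mul_sum]
  refine Finset.sum_congr rfl fun k hk => ?_
  have hk' : k ≤ n := Nat.lt_succ_iff.mp (Finset.mem_range.mp hk)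
  rw [bb_absorb hq hqp hk' x]
  ring

lemma mom1 {p q : ℝ} (hq : 0 < q) (hqp : q < p) (n : ℕ) (x : ℝ) :
    ∑ k ∈ Finset.range (n + 2), bb p q (n + 1) k x * (p ^ (n + 1 - k) * pqInt p q k) =
      pqInt p q (n + 1) * x * (p ^ n * p ^ (n.choose 2)) := by
  have h : ∑ k ∈ Finset.range (n + 2), bb p q (n + 1) k x * (p ^ (n + 1 - k) * pqInt p q k)
      = ∑ k ∈ Finset.range (n + 2), bb p q (n + 1) k x * pqInt p q k * (fun k => p ^ (n + 1 - k)) k := by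
    refine Finset.sum_congr rfl fun k _ => by ring
  rw [h, reduce hq hqp n x]
  congr 1
  have h2 : ∀ k ∈ Finset.range (n + 1),
      p ^ k * bb p q n k x * p ^ (n + 1 - (k + 1)) = p ^ n * bb p q n k x := by
    intro k hk
    have hk' : k ≤ n := Nat.lt_succ_iff.mp (Finset.mem_range.mp hk)
    have : p ^ k * p ^ (n + 1 - (k + 1)) = p ^ n := by
      rw [← pow_add]; congr 1; omega
    linear_combination bb p q n k x * this
  rw [Finset.sum_congr rfl h2, ← Finset.mul_sum, bsum hq hqp n x]

lemma mom1_all {p q : ℝ} (hq : 0 < q) (hqp : q < p) (n : ℕ) (x : ℝ) :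
    ∑ k ∈ Finset.range (n + 1), bb p q n k x * (p ^ (n - k) * pqInt p q k) =
      pqInt p q n * x * (p ^ (n - 1) * p ^ ((n - 1).choose 2)) := by
  cases n with
  | zero => simp [pqInt_zero]
  | succ m =>
    rw [mom1 hq hqp m x]
    simp

lemma mom2 {p q : ℝ} (hq : 0 < q) (hqp : q < p) (n : ℕ) (x : ℝ) :
    ∑ k ∈ Finset.range (n + 2), bb p q (n + 1) k x * (p ^ (2 * (n + 1 - k)) * (pqInt p q k) ^ 2) =
      pqInt p q (n + 1) * x * (p ^ (2 * n) * p ^ (n.choose 2) +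
        q * p ^ n * ∑ k ∈ Finset.range (n + 1), bb p q n k x * (p ^ (n - k) * pqInt p q k)) := by
  have h : ∑ k ∈ Finset.range (n + 2), bb p q (n + 1) k x * (p ^ (2 * (n + 1 - k)) * (pqInt p q k) ^ 2)
      = ∑ k ∈ Finset.range (n + 2), bb p q (n + 1) k x * pqInt p q k *
          (fun k => p ^ (2 * (n + 1 - k)) * pqInt p q k) k := by
    refine Finset.sum_congr rfl fun k _ => by ring
  rw [h, reduce hq hqp n x]
  congr 1
  have h2 : ∀ k ∈ Finset.range (n + 1),
      p ^ k * bb p q n k x * (p ^ (2 * (n + 1 - (k + 1))) * pqInt p q (k + 1)) =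
        p ^ (2 * n) * bb p q n k x +
          q * p ^ n * (bb p q n k x * (p ^ (n - k) * pqInt p q k)) := by
    intro k hk
    have hk' : k ≤ n := Nat.lt_succ_iff.mp (Finset.mem_range.mp hk)
    rw [pqInt_succ]
    have hp1 : p ^ k * p ^ (2 * (n + 1 - (k + 1))) * p ^ k = p ^ (2 * n) := by
      rw [← pow_add, ← pow_add]; congr 1; omega
    have hp2 : p ^ k * p ^ (2 * (n + 1 - (k + 1))) = p ^ n * p ^ (n - k) := by
      rw [← pow_add, ← pow_add]; congr 1; omega
    linear_combination bb p q n k x * hp1 + q * pqInt p q k * bb p q n k x * hp2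
  rw [Finset.sum_congr rfl h2, Finset.sum_add_distrib, ← Finset.mul_sum, ← Finset.mul_sum,
    bsum hq hqp n x]

lemma mom3 {p q : ℝ} (hq : 0 < q) (hqp : q < p) (n : ℕ) (x : ℝ) :
    ∑ k ∈ Finset.range (n + 2), bb p q (n + 1) k x * (p ^ (3 * (n + 1 - k)) * (pqInt p q k) ^ 3) =
      pqInt p q (n + 1) * x * (p ^ (3 * n) * p ^ (n.choose 2) +
        2 * q * p ^ (2 * n) * ∑ k ∈ Finset.range (n + 1), bb p q n k x * (p ^ (n - k) * pqInt p q k) +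
        q ^ 2 * p ^ n * ∑ k ∈ Finset.range (n + 1), bb p q n k x * (p ^ (2 * (n - k)) * (pqInt p q k) ^ 2)) := by
  have h : ∑ k ∈ Finset.range (n + 2), bb p q (n + 1) k x * (p ^ (3 * (n + 1 - k)) * (pqInt p q k) ^ 3)
      = ∑ k ∈ Finset.range (n + 2), bb p q (n + 1) k x * pqInt p q k *
          (fun k => p ^ (3 * (n + 1 - k)) * (pqInt p q k) ^ 2) k := by
    refine Finset.sum_congr rfl fun k _ => by ring
  rw [h, reduce hq hqp n x]
  congr 1
  have h2 : ∀ k ∈ Finset.range (n + 1),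
      p ^ k * bb p q n k x * (p ^ (3 * (n + 1 - (k + 1))) * (pqInt p q (k + 1)) ^ 2) =
        p ^ (3 * n) * bb p q n k x +
          2 * q * p ^ (2 * n) * (bb p q n k x * (p ^ (n - k) * pqInt p q k)) +
          q ^ 2 * p ^ n * (bb p q n k x * (p ^ (2 * (n - k)) * (pqInt p q k) ^ 2)) := by
    intro k hk
    have hk' : k ≤ n := Nat.lt_succ_iff.mp (Finset.mem_range.mp hk)
    rw [pqInt_succ]
    have hp1 : p ^ k * p ^ (3 * (n + 1 - (k + 1))) * (p ^ k * p ^ k) = p ^ (3 * n) := by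
      rw [← pow_add, ← pow_add, ← pow_add]; congr 1; omega
    have hp2 : p ^ k * p ^ (3 * (n + 1 - (k + 1))) * p ^ k = p ^ (2 * n) * p ^ (n - k) := by
      rw [← pow_add, ← pow_add, ← pow_add]; congr 1; omega
    have hp3 : p ^ k * p ^ (3 * (n + 1 - (k + 1))) = p ^ n * p ^ (2 * (n - k)) := by
      rw [← pow_add, ← pow_add]; congr 1; omega
    linear_combination bb p q n k x * hp1 + 2 * q * pqInt p q k * bb p q n k x * hp2 +
      q ^ 2 * (pqInt p q k) ^ 2 * bb p q n k x * hp3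
  rw [Finset.sum_congr rfl h2]
  rw [Finset.sum_add_distrib, Finset.sum_add_distrib, ← Finset.mul_sum, ← Finset.mul_sum,
    ← Finset.mul_sum, bsum hq hqp n x]

lemma bridge {p q : ℝ} (hq : 0 < q) (hqp : q < p) (m : ℕ) (x : ℝ) :
    pqBernstein p q (m + 1) (fun t => t ^ 3) x =
      (∑ k ∈ Finset.range (m + 2), bb p q (m + 1) k x *
        (p ^ (3 * (m + 1 - k)) * (pqInt p q k) ^ 3)) /
        (p ^ ((m + 1).choose 2) * (pqInt p q (m + 1)) ^ 3) := by
  have hp : (0:ℝ) < p := hq.trans hqp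
  have hIn : pqInt p q (m + 1) ≠ 0 := (pqInt_pos hq hqp (Nat.succ_pos m)).ne'
  have hpc : (p : ℝ) ^ ((m + 1).choose 2) ≠ 0 := pow_ne_zero _ hp.ne'
  unfold pqBernstein
  rw [Finset.sum_div]
  refine Finset.sum_congr rfl fun k hk => ?_
  simp only [pqBasis, pqNode, bb, pqProd]
  have h3 : (p ^ (m + 1 - k)) ^ 3 = p ^ (3 * (m + 1 - k)) := by rw [← pow_mul, mul_comm]
  rw [div_pow, mul_pow, h3]
  field_simp
  simp only [mul_comm (q ^ _) x]
  ring

theorem pqBernstein_moment_e3 (p q : ℝ) (n : ℕ)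
    (hq : 0 < q) (hqp : q < p) (hp : p ≤ 1) (hn : 2 ≤ n)
    (x : ℝ) (hx : x ∈ Set.Icc (0 : ℝ) 1) :
    pqBernstein p q n (fun t => t ^ 3) x =
      (p ^ (2 * n - 2) / (pqInt p q n) ^ 2) * x +
      (p ^ (n - 2) * (2 * p + q) * q * pqInt p q (n - 1) / (pqInt p q n) ^ 2) * x ^ 2 +
      (q ^ 3 * pqInt p q (n - 1) * pqInt p q (n - 2) / (pqInt p q n) ^ 2) * x ^ 3 := by
  have hp0 : (0:ℝ) < p := hq.trans hqp
  obtain ⟨l, rfl⟩ : ∃ l, n = l + 1 + 1 := ⟨n - 2, by omega⟩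
  have h3 := mom3 hq hqp (l + 1) x
  have h1 := mom1_all hq hqp (l + 1) x
  have h0 := mom1_all hq hqp l x
  have h2 := mom2 hq hqp l x
  rw [h1] at h3
  rw [h0] at h2
  rw [show (l:ℕ) + 2 = l + 1 + 1 from rfl] at h2
  rw [h2] at h3
  rw [bridge hq hqp (l + 1) x]
  rw [show (l:ℕ) + 1 + 2 = l + 1 + 1 + 1 from rfl] at h3 ⊢
  rw [h3]
  have hI2 : pqInt p q (l + 1 + 1) ≠ 0 := (pqInt_pos hq hqp (by omega)).ne'
  simp only [Nat.add_sub_cancel, choose_two_succ,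
    show (l:ℕ) + 1 + 1 - 2 = l from by omega,
    show 2 * ((l:ℕ) + 1 + 1) - 2 = 2 * l + 2 from by omega]
  rcases l with _ | m
  · simp only [pqInt_zero]
    field_simp
    ring
  · simp only [Nat.add_sub_cancel, choose_two_succ]
    field_simp
    ring
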